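/- For positive semidefinite symmetric n×n real matrices A and B with A + B ≠ 0, A ≠ 0, B ≠ 0, the intrinsic dimension is subadditive: tr(A+B)/‖A+B‖ ≤ tr(A)/‖A‖ + tr(B)/‖B‖. -/

import Mathlib

open Matrix

section Aux

open RCLike ContinuousLinearMap
open scoped RealInnerProductSpace

set_option maxHeartbeats 1000000
set_option synthInstance.maxHeartbeats 400000

variable {E : Type*} [NormedAddCommGroup E] [InnerProductSpace ℝ E] [CompleteSpace E]

lemma aux_norm_le_of_isPositive {T : E →L[ℝ] E} (hT : T.IsPositive) {M : ℝ} (hM : 0 ≤ M)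
    (h : ∀ x : E, ⟪T x, x⟫ ≤ M * ‖x‖ ^ 2) : ‖T‖ ≤ M := by
  refine T.opNorm_le_bound hM fun x => ?_
  by_cases hTx : T x = 0
  · simp only [hTx, norm_zero]
    positivity
  have hTxn : (0 : ℝ) < ‖T x‖ := norm_pos_iff.mpr hTx
  have hx : x ≠ 0 := by rintro rfl; simp at hTx
  have hxn : (0 : ℝ) < ‖x‖ := norm_pos_iff.mpr hx
  set y := (‖x‖ / ‖T x‖) • T x with hy
  have hsym : ⟪T y, x⟫ = ⟪T x, y⟫ := by
    have h' := hT.1 y x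
    simp only [ContinuousLinearMap.coe_coe] at h'
    rw [h', real_inner_comm]
  have h0 : (0 : ℝ) ≤ ⟪T (x - y), x - y⟫ := by
    have := hT.2 (x - y)
    rwa [ContinuousLinearMap.reApplyInnerSelf_apply] at this
  have hexp : ⟪T (x - y), x - y⟫ = ⟪T x, x⟫ - 2 * ⟪T x, y⟫ + ⟪T y, y⟫ := by
    rw [map_sub, inner_sub_left, inner_sub_right, inner_sub_right, hsym]
    ring
  have h2 : 2 * ⟪T x, y⟫ ≤ ⟪T x, x⟫ + ⟪T y, y⟫ := by
    rw [hexp] at h0; linarith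
  have hTxy : ⟪T x, y⟫ = ‖x‖ * ‖T x‖ := by
    rw [hy, real_inner_smul_right, real_inner_self_eq_norm_sq]
    field_simp
  have hyn : ‖y‖ = ‖x‖ := by
    rw [hy, norm_smul, Real.norm_eq_abs, abs_of_nonneg (by positivity)]
    field_simp
  have hMy : ⟪T y, y⟫ ≤ M * ‖x‖ ^ 2 := by
    have := h y; rwa [hyn] at this
  have hMx : ⟪T x, x⟫ ≤ M * ‖x‖ ^ 2 := h x
  have : 2 * (‖x‖ * ‖T x‖) ≤ 2 * (M * ‖x‖ ^ 2) := by
    rw [← hTxy]; linarith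
  nlinarith

lemma aux_norm_le_norm_add {T S : E →L[ℝ] E} (hT : T.IsPositive) (hS : S.IsPositive) :
    ‖T‖ ≤ ‖T + S‖ := by
  refine aux_norm_le_of_isPositive hT (norm_nonneg _) fun x => ?_
  have hSx := hS.2 x
  rw [ContinuousLinearMap.reApplyInnerSelf_apply] at hSx
  have h1 : ⟪T x, x⟫ ≤ ⟪(T + S) x, x⟫ := by
    simp only [ContinuousLinearMap.add_apply, inner_add_left]
    simp only [RCLike.inner_apply, RCLike.re_to_real, starRingEnd_apply, star_trivial] at hSx ⊢
    linarith
  refine h1.trans ?_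
  calc ⟪(T + S) x, x⟫ ≤ ‖(T + S) x‖ * ‖x‖ := real_inner_le_norm _ _
    _ ≤ ‖T + S‖ * ‖x‖ * ‖x‖ := by
        gcongr
        exact (T + S).le_opNorm x
    _ = ‖T + S‖ * ‖x‖ ^ 2 := by ring

lemma aux_isPositive {n : ℕ} {A : Matrix (Fin n) (Fin n) ℝ} (hA : A.PosSemidef) :
    (toEuclideanCLM (𝕜 := ℝ) A).IsPositive := by
  constructor
  · rw [← ContinuousLinearMap.isSelfAdjoint_iff_isSymmetric, _root_.IsSelfAdjoint, ← map_star]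
    congr 1
    rw [Matrix.star_eq_conjTranspose]
    exact hA.1
  · intro x
    rw [ContinuousLinearMap.reApplyInnerSelf_apply]
    have h := hA.dotProduct_mulVec_nonneg (⇑(WithLp.equiv 2 (Fin n → ℝ)) x)
    simp only [star_trivial] at h
    rw [PiLp.inner_apply]
    rw [dotProduct] at h
    simp only [RCLike.inner_apply, starRingEnd_apply, star_trivial, map_sum, RCLike.re_to_real]
    refine h.trans_eq ?_
    apply Finset.sum_congr rfl
    intro i _
    have hx := congrFun (Matrix.ofLp_toEuclideanCLM (𝕜 := ℝ) A x) i
    congr 1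

lemma aux_trace_nonneg {n : ℕ} {A : Matrix (Fin n) (Fin n) ℝ} (hA : A.PosSemidef) :
    0 ≤ A.trace := by
  rw [Matrix.trace]
  refine Finset.sum_nonneg fun i _ => ?_
  have := hA.dotProduct_mulVec_nonneg (Pi.single i 1)
  simpa using this

lemma aux_toEuclideanCLM_ne_zero {n : ℕ} {A : Matrix (Fin n) (Fin n) ℝ} (hA0 : A ≠ 0) :
    (0 : ℝ) < ‖toEuclideanCLM (𝕜 := ℝ) A‖ := by
  refine norm_pos_iff.mpr fun h => hA0 ?_
  apply (toEuclideanCLM (𝕜 := ℝ) (n := Fin n)).injective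
  rw [map_zero]
  exact h

end Aux

set_option maxHeartbeats 1000000 in
set_option synthInstance.maxHeartbeats 400000 in
theorem stmt_4 {n : ℕ} (A B : Matrix (Fin n) (Fin n) ℝ)
    (hA : A.PosSemidef) (hB : B.PosSemidef)
    (hA0 : A ≠ 0) (hB0 : B ≠ 0) (hAB0 : A + B ≠ 0) :
    (A + B).trace / ‖toEuclideanCLM (𝕜 := ℝ) (A + B)‖ ≤
      A.trace / ‖toEuclideanCLM (𝕜 := ℝ) A‖ + B.trace / ‖toEuclideanCLM (𝕜 := ℝ) B‖ := by
  have hTA := aux_isPositive hA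
  have hTB := aux_isPositive hB
  have hnA := aux_toEuclideanCLM_ne_zero hA0
  have hnB := aux_toEuclideanCLM_ne_zero hB0
  have hnAB := aux_toEuclideanCLM_ne_zero hAB0
  have hmap : toEuclideanCLM (𝕜 := ℝ) (A + B)
      = toEuclideanCLM (𝕜 := ℝ) A + toEuclideanCLM (𝕜 := ℝ) B := map_add _ _ _
  have hle1 : ‖toEuclideanCLM (𝕜 := ℝ) A‖ ≤ ‖toEuclideanCLM (𝕜 := ℝ) (A + B)‖ := by
    rw [hmap]; exact aux_norm_le_norm_add hTA hTB
  have hle2 : ‖toEuclideanCLM (𝕜 := ℝ) B‖ ≤ ‖toEuclideanCLM (𝕜 := ℝ) (A + B)‖ := by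
    rw [hmap, add_comm (toEuclideanCLM (𝕜 := ℝ) A)]
    exact aux_norm_le_norm_add hTB hTA
  have htA := aux_trace_nonneg hA
  have htB := aux_trace_nonneg hB
  rw [Matrix.trace_add, add_div]
  exact add_le_add (div_le_div_of_nonneg_left htA hnA hle1)
    (div_le_div_of_nonneg_left htB hnB hle2)
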